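/- Let α = 3 - 2√2 and n ≥ 3. Then √2(1+α^n)/(1-α^n) > (1+α^n)/(√2(1-α^n)); that is, r(u_1,v_1) > r(p_1,q_1) in the hexagonal cylinder chain R_n. Moreover (1+α^n)/(√2(1-α^n)) is the minimum among the six values (1+α^n)/(√2(1-α^n)), (4-√2-(4+√2)α^n)/(2(1-α^n)) - 1/n, (2-√2-(2+√2)α^n)/(1-α^n) + (n-1)/n, √2(1+α^n)/(1-α^n), (4√2-1-(1+4√2)α^n)/(4√2(1-α^n)) - 1/(4n), and 7(1+α^n)/(4√2(1-α^n)) - 1/(4n). -/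
import Mathlib

set_option maxHeartbeats 2000000 in
theorem stmt_16 (α : ℝ) (hα : α = 3 - 2 * Real.sqrt 2) (n : ℕ) (hn : 3 ≤ n) :
    (Real.sqrt 2 * (1 + α ^ n) / (1 - α ^ n) >
      (1 + α ^ n) / (Real.sqrt 2 * (1 - α ^ n))) ∧
    ((1 + α ^ n) / (Real.sqrt 2 * (1 - α ^ n)) ≤
      (4 - Real.sqrt 2 - (4 + Real.sqrt 2) * α ^ n) / (2 * (1 - α ^ n)) - 1 / n) ∧
    ((1 + α ^ n) / (Real.sqrt 2 * (1 - α ^ n)) ≤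
      (2 - Real.sqrt 2 - (2 + Real.sqrt 2) * α ^ n) / (1 - α ^ n) + ((n : ℝ) - 1) / n) ∧
    ((1 + α ^ n) / (Real.sqrt 2 * (1 - α ^ n)) ≤
      Real.sqrt 2 * (1 + α ^ n) / (1 - α ^ n)) ∧
    ((1 + α ^ n) / (Real.sqrt 2 * (1 - α ^ n)) ≤
      (4 * Real.sqrt 2 - 1 - (1 + 4 * Real.sqrt 2) * α ^ n) /
        (4 * Real.sqrt 2 * (1 - α ^ n)) - 1 / (4 * n)) ∧
    ((1 + α ^ n) / (Real.sqrt 2 * (1 - α ^ n)) ≤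
      7 * (1 + α ^ n) / (4 * Real.sqrt 2 * (1 - α ^ n)) - 1 / (4 * n)) := by
  set s := Real.sqrt 2 with hs
  have hs2 : s ^ 2 = 2 := Real.sq_sqrt (by norm_num)
  have hs0 : 0 < s := Real.sqrt_pos.mpr (by norm_num)
  have hsl : 1.414 < s := by nlinarith
  have hsu : s < 1.415 := by nlinarith
  have hα0 : 0 < α := by rw [hα]; nlinarith
  have hα1 : α < 1 := by rw [hα]; nlinarith
  have hx0 : 0 < α ^ n := pow_pos hα0 n
  have hx3 : α ^ n ≤ α ^ 3 := pow_le_pow_of_le_one hα0.le hα1.le hn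
  have hxb : α ^ n ≤ 99 - 70 * s := by
    calc α ^ n ≤ α ^ 3 := hx3
    _ = 99 - 70 * s := by rw [hα]; ring_nf; nlinarith
  have hxb' : α ^ n < 0.006 := by nlinarith
  have hden : 0 < 1 - α ^ n := by nlinarith
  have hn3 : (3:ℝ) ≤ n := by exact_mod_cast hn
  have hnpos : (0:ℝ) < n := by linarith
  have h1n : 1 / (n:ℝ) ≤ 1 / 3 := by
    apply one_div_le_one_div_of_le <;> linarith
  set x := α ^ n with hxd
  have hsne : s ≠ 0 := hs0.ne'
  have hdne : (1 - x) ≠ 0 := hden.ne'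
  refine ⟨?_, ?_, ?_, ?_, ?_, ?_⟩
  · rw [gt_iff_lt, div_lt_div_iff₀ (by positivity) hden]
    nlinarith [sq_nonneg (1+x)]
  · have key : (1 + x) / (s * (1 - x)) ≤
        (4 - s - (4 + s) * x) / (2 * (1 - x)) - 1 / 3 := by
      rw [le_sub_iff_add_le, div_add' _ _ _ (by positivity : (s * (1 - x)) ≠ 0),
        div_le_div_iff₀ (by positivity) (by positivity)]
      nlinarith [mul_pos hs0 hden, sq_nonneg x]
    linarith
  · have hfrac : ((n:ℝ) - 1) / n = 1 - 1 / n := by field_simp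
    have key : (1 + x) / (s * (1 - x)) ≤
        (2 - s - (2 + s) * x) / (1 - x) + 2 / 3 := by
      rw [div_add' _ _ _ hdne, div_le_div_iff₀ (by positivity) hden]
      nlinarith [mul_pos hs0 hden, sq_nonneg x]
    rw [hfrac]; linarith
  · rw [div_le_div_iff₀ (by positivity) hden]; nlinarith [sq_nonneg (1+x)]
  · have h4n : 1 / (4 * (n:ℝ)) ≤ 1 / 12 := by
      rw [show (1:ℝ)/(4*(n:ℝ)) = (1/n)/4 by ring]; linarith
    have key : (1 + x) / (s * (1 - x)) ≤
        (4 * s - 1 - (1 + 4 * s) * x) / (4 * s * (1 - x)) - 1 / 12 := by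
      have hsx : s * x < 0.0085 := by nlinarith
      have h5 : 4 * (1 + x) + s * (1 - x) / 3 ≤ 4 * s - 1 - (1 + 4 * s) * x := by
        nlinarith
      have h6 := mul_le_mul_of_nonneg_right h5 (mul_pos hs0 hden).le
      rw [le_sub_iff_add_le, div_add' _ _ _ (by positivity : (s * (1 - x)) ≠ 0),
        div_le_div_iff₀ (by positivity) (by positivity)]
      nlinarith [h6, hs2, mul_pos hs0 hden, sq_nonneg x]
    linarith
  · have h4n : 1 / (4 * (n:ℝ)) ≤ 1 / 12 := by
      rw [show (1:ℝ)/(4*(n:ℝ)) = (1/n)/4 by ring]; linarith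
    have key : (1 + x) / (s * (1 - x)) ≤
        7 * (1 + x) / (4 * s * (1 - x)) - 1 / 12 := by
      rw [le_sub_iff_add_le, div_add' _ _ _ (by positivity : (s * (1 - x)) ≠ 0),
        div_le_div_iff₀ (by positivity) (by positivity)]
      nlinarith [mul_pos hs0 hden, sq_nonneg x]
    linarith
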